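/- Fix an integer n ≥ 1, t₀ ∈ ℝ, and let μ(t) = (1 − e^{−(t−t₀)})ⁿ. For every t_a > t₀, the quantity τ_{t_a} := sup_{t ≥ t_a} ‖T_n(μ(t))^{−1}‖ is finite, where ‖·‖ is the operator norm induced by the Euclidean norm on ℝⁿ. -/

import Mathlib

open Matrix

/-- The coefficients `α_{j,i}` (`j` is 1-based) for fixed order `n`, defined by the
recursion `α_{j,0} = 1`, `α_{n,i} = (-1)^i`, `α_{j,i} = α_{j+1,i} - α_{j,i-1}`. -/
def alphaCoef (n : ℕ) (j i : ℕ) : ℤ :=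
  if n ≤ j then (-1) ^ i
  else if i = 0 then 1
  else alphaCoef n (j + 1) i - alphaCoef n j (i - 1)
termination_by (n - j, i)
decreasing_by
  · apply Prod.Lex.left; omega
  · apply Prod.Lex.right' <;> omega

/-- The modulating-function-based transformation matrix `T_n(μ(t))`, whose (1-based)
`(j,k)` entry is `α_{j,j-k} μ^{(j-k)}(t)` for `k ≤ j` and `0` otherwise. -/
noncomputable def Tmat (n : ℕ) (μ : ℝ → ℝ) (t : ℝ) : Matrix (Fin n) (Fin n) ℝ :=
  Matrix.of fun j k : Fin n =>
    if (k : ℕ) ≤ (j : ℕ) then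
      (alphaCoef n ((j : ℕ) + 1) ((j : ℕ) - (k : ℕ)) : ℝ) * iteratedDeriv ((j : ℕ) - (k : ℕ)) μ t
    else 0

/-- `T_n(μ^{(1)}(t))`: the matrix obtained from `T_n` by shifting all derivative
orders up by one; its (1-based) `(j,k)` entry is `α_{j,j-k} μ^{(j-k+1)}(t)` for `k ≤ j`. -/
noncomputable def TmatShift (n : ℕ) (μ : ℝ → ℝ) (t : ℝ) : Matrix (Fin n) (Fin n) ℝ :=
  Matrix.of fun j k : Fin n =>
    if (k : ℕ) ≤ (j : ℕ) then
      (alphaCoef n ((j : ℕ) + 1) ((j : ℕ) - (k : ℕ)) : ℝ) * iteratedDeriv ((j : ℕ) - (k : ℕ) + 1) μ t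
    else 0

/-- The Brunovsky (nilpotent shift) matrix `A`: ones on the superdiagonal, zeros elsewhere. -/
def Amat (n : ℕ) : Matrix (Fin n) (Fin n) ℝ :=
  Matrix.of fun j k : Fin n => if (k : ℕ) = (j : ℕ) + 1 then 1 else 0

/-- First standard basis vector `e₁` of `ℝⁿ`. -/
def e1vec (n : ℕ) : Fin n → ℝ := fun k => if (k : ℕ) = 0 then 1 else 0

/-- Last standard basis vector `B₀ = (0,…,0,1)ᵀ` of `ℝⁿ`. -/
def B0vec (n : ℕ) : Fin n → ℝ := fun k => if (k : ℕ) = n - 1 then 1 else 0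

/-- The vector `B_α(t)` whose (1-based) `j`-th entry is `(-1)^(j-1) C(n,j) μ^{(j)}(t)`. -/
noncomputable def Balpha (n : ℕ) (μ : ℝ → ℝ) (t : ℝ) : Fin n → ℝ :=
  fun j => (-1 : ℝ) ^ (j : ℕ) * (n.choose ((j : ℕ) + 1)) * iteratedDeriv ((j : ℕ) + 1) μ t

lemma alphaCoef_zero' (n j : ℕ) : alphaCoef n j 0 = 1 := by
  rw [alphaCoef]; split <;> simp

lemma Tmat_det' (n : ℕ) (μ : ℝ → ℝ) (t : ℝ) : (Tmat n μ t).det = μ t ^ n := by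
  rw [Matrix.det_of_lowerTriangular _ (fun i j h => ?_)]
  · simp only [Tmat, Matrix.of_apply, le_refl, if_pos, Nat.sub_self, alphaCoef_zero',
      iteratedDeriv_zero]
    simp [Finset.prod_const]
  · have : (i : ℕ) < (j : ℕ) := h
    simp only [Tmat, Matrix.of_apply]
    rw [if_neg (Nat.not_le.mpr this)]

lemma iteratedDeriv_poly' (t₀ : ℝ) (n : ℕ) : ∀ k : ℕ, ∃ p : Polynomial ℝ,
    p.eval 0 = (if k = 0 then 1 else 0) ∧
    ∀ t, iteratedDeriv k (fun t => (1 - Real.exp (-(t - t₀))) ^ n) t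
      = p.eval (Real.exp (-(t - t₀))) := by
  intro k
  induction k with
  | zero =>
    refine ⟨(1 - Polynomial.X) ^ n, by simp, fun t => by simp [iteratedDeriv]⟩
  | succ k ih =>
    obtain ⟨p, hp0, hp⟩ := ih
    refine ⟨-(Polynomial.X * p.derivative), by simp, fun t => ?_⟩
    rw [iteratedDeriv_succ]
    have hfn : iteratedDeriv k (fun t => (1 - Real.exp (-(t - t₀))) ^ n)
        = fun s => p.eval (Real.exp (-(s - t₀))) := funext hp
    rw [hfn]
    have h1 : HasDerivAt (fun s : ℝ => -(s - t₀)) (-1) t := by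
      have := ((hasDerivAt_id t).sub_const t₀).neg; exact this
    have h2 : HasDerivAt (fun s : ℝ => Real.exp (-(s - t₀)))
        (Real.exp (-(t - t₀)) * -1) t := h1.exp
    have h3 : HasDerivAt (fun s : ℝ => p.eval (Real.exp (-(s - t₀))))
        (p.derivative.eval (Real.exp (-(t - t₀))) * (Real.exp (-(t - t₀)) * -1)) t :=
      HasDerivAt.comp t (p.hasDerivAt _) h2
    rw [h3.deriv]
    simp
    ring

lemma bddAbove_of_tendsto' {f : ℝ → ℝ} {a L : ℝ} (hc : ContinuousOn f (Set.Ici a))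
    (hl : Filter.Tendsto f Filter.atTop (nhds L)) : BddAbove (f '' Set.Ici a) := by
  have hev : ∀ᶠ t in Filter.atTop, f t ≤ L + 1 :=
    hl.eventually (eventually_le_nhds (lt_add_one L))
  obtain ⟨T, hT⟩ := hev.exists_forall_of_atTop
  obtain ⟨M, hM⟩ := (isCompact_Icc (a := a) (b := max a T)).bddAbove_image
    (hc.mono Set.Icc_subset_Ici_self)
  refine ⟨max M (L + 1), ?_⟩
  rintro x ⟨t, ht, rfl⟩
  rcases le_or_gt t (max a T) with h | h
  · exact le_trans (hM ⟨t, ⟨ht, h⟩, rfl⟩) (le_max_left _ _)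
  · exact le_trans (hT t (le_of_lt (lt_of_le_of_lt (le_max_right a T) h))) (le_max_right _ _)

/-- for `μ(t) = (1 - e^{-(t-t₀)})ⁿ` and every `t_a > t₀`, the quantity
`τ_{t_a} = sup_{t ≥ t_a} ‖T_n(μ(t))⁻¹‖` (operator norm induced by the Euclidean norm)
is finite, i.e. the function `t ↦ ‖T_n(μ(t))⁻¹‖` is bounded above on `[t_a,∞)`. -/
theorem Tmat_inv_opNorm_bounded (n : ℕ) (hn : 1 ≤ n) (t₀ : ℝ) (μ : ℝ → ℝ)
    (hμdef : ∀ t, μ t = (1 - Real.exp (-(t - t₀))) ^ n) :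
    ∀ ta > t₀,
      BddAbove ((fun t => ‖Matrix.toEuclideanCLM (𝕜 := ℝ) ((Tmat n μ t)⁻¹)‖) ''
        Set.Ici ta) := by
  intro ta hta
  have hμ : μ = fun t => (1 - Real.exp (-(t - t₀))) ^ n := funext hμdef
  -- exp (-(t - t₀)) tends to 0
  have hexp : Filter.Tendsto (fun t : ℝ => Real.exp (-(t - t₀))) Filter.atTop (nhds 0) := by
    apply Real.tendsto_exp_atBot.comp
    apply Filter.tendsto_neg_atBot_iff.mpr
    exact Filter.tendsto_atTop_add_const_right _ _ Filter.tendsto_id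
  have hexpc : Continuous (fun t : ℝ => Real.exp (-(t - t₀))) := by continuity
  -- continuity and limits of iterated derivatives
  have hcont : ∀ k, Continuous (fun t => iteratedDeriv k μ t) := by
    intro k
    obtain ⟨p, _, hp⟩ := iteratedDeriv_poly' t₀ n k
    rw [hμ]
    have : (fun t => iteratedDeriv k (fun t => (1 - Real.exp (-(t - t₀))) ^ n) t)
        = fun t => p.eval (Real.exp (-(t - t₀))) := funext hp
    rw [this]
    exact p.continuous.comp hexpc
  have hlim : ∀ k, Filter.Tendsto (fun t => iteratedDeriv k μ t) Filter.atTop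
      (nhds (if k = 0 then 1 else 0)) := by
    intro k
    obtain ⟨p, hp0, hp⟩ := iteratedDeriv_poly' t₀ n k
    rw [hμ]
    have : (fun t => iteratedDeriv k (fun t => (1 - Real.exp (-(t - t₀))) ^ n) t)
        = fun t => p.eval (Real.exp (-(t - t₀))) := funext hp
    rw [this, ← hp0]
    exact (p.continuous.tendsto 0).comp hexp
  -- continuity of Tmat
  have hT : Continuous (fun t => Tmat n μ t) := by
    apply continuous_matrix
    intro j k
    simp only [Tmat, Matrix.of_apply]
    split_ifs
    · exact continuous_const.mul (hcont _)
    · exact continuous_const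
  -- Tmat tends to the identity matrix
  have hTlim : Filter.Tendsto (fun t => Tmat n μ t) Filter.atTop
      (nhds (1 : Matrix (Fin n) (Fin n) ℝ)) := by
    apply tendsto_pi_nhds.mpr
    intro j
    rw [tendsto_pi_nhds]
    intro k
    simp only [Tmat, Matrix.of_apply]
    by_cases hkj : (k : ℕ) ≤ (j : ℕ)
    · simp only [hkj, if_pos]
      have := (tendsto_const_nhds (x := (alphaCoef n ((j : ℕ) + 1) ((j : ℕ) - (k : ℕ)) : ℝ))
        (f := Filter.atTop (α := ℝ))).mul (hlim ((j : ℕ) - (k : ℕ)))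
      rcases eq_or_lt_of_le hkj with heq | hlt
      · have hjk : j = k := Fin.ext heq.symm
        subst hjk
        simpa [Matrix.one_apply, alphaCoef_zero'] using this
      · have h1 : (j : ℕ) - (k : ℕ) ≠ 0 := by omega
        have h2 : j ≠ k := by intro h; subst h; omega
        simpa [Matrix.one_apply, h1, h2] using this
    · have h2 : j ≠ k := by intro h; subst h; omega
      simpa [hkj, Matrix.one_apply, h2] using tendsto_const_nhds
  -- determinant positivity on [ta, ∞)
  have hdetpos : ∀ t, ta ≤ t → 0 < (Tmat n μ t).det := by
    intro t ht
    rw [Tmat_det', hμdef]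
    apply pow_pos (pow_pos ?_ n)
    have : Real.exp (-(t - t₀)) < 1 := Real.exp_lt_one_iff.mpr (by linarith)
    linarith
  -- the inverse as a continuous expression
  have hinv : ∀ t, (Tmat n μ t)⁻¹ = ((Tmat n μ t).det)⁻¹ • (Tmat n μ t).adjugate := by
    intro t
    rw [Matrix.inv_def, Ring.inverse_eq_inv]
  set g : ℝ → Matrix (Fin n) (Fin n) ℝ :=
    fun t => ((Tmat n μ t).det)⁻¹ • (Tmat n μ t).adjugate with hg
  have hgc : ContinuousOn g (Set.Ici ta) := by
    intro t ht
    apply ContinuousAt.continuousWithinAt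
    exact ((hT.matrix_det.continuousAt).inv₀ (ne_of_gt (hdetpos t ht))).smul
      (hT.matrix_adjugate.continuousAt)
  have hglim : Filter.Tendsto g Filter.atTop (nhds (1 : Matrix (Fin n) (Fin n) ℝ)) := by
    have hdl : Filter.Tendsto (fun t => (Tmat n μ t).det) Filter.atTop (nhds 1) := by
      have := (continuous_id.matrix_det (R := ℝ) (n := Fin n)).tendsto 1
      simpa [Function.comp_def] using this.comp hTlim
    have hal : Filter.Tendsto (fun t => (Tmat n μ t).adjugate) Filter.atTop
        (nhds (1 : Matrix (Fin n) (Fin n) ℝ)) := by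
      have := (continuous_id.matrix_adjugate (R := ℝ) (n := Fin n)).tendsto 1
      simpa [Matrix.adjugate_one, Function.comp_def] using this.comp hTlim
    have := (hdl.inv₀ one_ne_zero).smul hal
    simpa using this
  -- the norm of the CLM is continuous in the matrix
  let Φ : Matrix (Fin n) (Fin n) ℝ →ₗ[ℝ]
      (EuclideanSpace ℝ (Fin n) →L[ℝ] EuclideanSpace ℝ (Fin n)) :=
    { toFun := fun A => Matrix.toEuclideanCLM (𝕜 := ℝ) A,
      map_add' := fun A B => map_add _ A B,
      map_smul' := fun c A => map_smul _ c A }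
  have hΦ : Continuous Φ := Φ.continuous_of_finiteDimensional
  have hfun : (fun t => ‖Matrix.toEuclideanCLM (𝕜 := ℝ) ((Tmat n μ t)⁻¹)‖)
      = fun t => ‖Φ (g t)‖ := by
    funext t
    rw [hinv t]
    rfl
  rw [hfun]
  apply bddAbove_of_tendsto' ((hΦ.comp_continuousOn hgc).norm)
  exact ((hΦ.tendsto 1).comp hglim).norm
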